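/- For real numbers a₁, a₂, b₁, b₂ and nonnegative weights p₁, p₂, q₁, q₂, r₁, r₂, s₁, s₂ with p₁+p₂ = q₁+q₂ = r₁+r₂ = s₁+s₂ = 1 and all weights strictly positive, if |p₁a₁ + q₁a₂ + r₁b₁ + s₁b₂| + |p₂a₁ + q₂a₂ + r₂b₁ + s₂b₂| = |a₁| + |a₂| + |b₁| + |b₂|, then a₁, a₂, b₁, b₂ all have the same sign (with 0 having the same sign as everything). -/
import Mathlib

lemma nonneg_of_pos_mul {c x : ℝ} (hc : 0 < c) (h : 0 ≤ c * x) : 0 ≤ x := by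
  nlinarith

lemma pair_sign_aux {x y : ℝ} (h : |x| + |y| ≤ |x + y|) : 0 ≤ x * y := by
  rcases abs_cases x with ⟨hx, _⟩ | ⟨hx, _⟩ <;>
    rcases abs_cases y with ⟨hy, _⟩ | ⟨hy, _⟩ <;>
      rcases abs_cases (x + y) with ⟨hxy, _⟩ | ⟨hxy, _⟩ <;> nlinarith

lemma four_abs_saturation {x y z w : ℝ}
    (h : |x + y + z + w| = |x| + |y| + |z| + |w|) :
    0 ≤ x * y ∧ 0 ≤ x * z ∧ 0 ≤ x * w ∧ 0 ≤ y * z ∧ 0 ≤ y * w ∧ 0 ≤ z * w := by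
  have key : ∀ u v c d : ℝ, x + y + z + w = u + v + (c + d) →
      |x| + |y| + |z| + |w| = |u| + |v| + (|c| + |d|) → 0 ≤ u * v := by
    intro u v c d hsum habs
    apply pair_sign_aux
    have h1 : |x + y + z + w| ≤ |u + v| + |c + d| := by
      rw [hsum]; exact abs_add_le _ _
    have h2 : |c + d| ≤ |c| + |d| := abs_add_le _ _
    linarith
  refine ⟨key x y z w (by ring) (by linarith), key x z y w (by ring) (by linarith),
    key x w y z (by ring) (by linarith), key y z x w (by ring) (by linarith),
    key y w x z (by ring) (by linarith), key z w x y (by ring) (by linarith)⟩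

/-- Saturation of the triangle inequality for strictly positive convex combinations:
if `|p₁a₁ + q₁a₂ + r₁b₁ + s₁b₂| + |p₂a₁ + q₂a₂ + r₂b₁ + s₂b₂| = |a₁| + |a₂| + |b₁| + |b₂|`
with strictly positive weights whose pairs sum to 1, then `a₁, a₂, b₁, b₂` all have the
same sign (0 counting as having the same sign as everything). -/
theorem convex_combination_abs_saturation_same_sign
    (a₁ a₂ b₁ b₂ p₁ p₂ q₁ q₂ r₁ r₂ s₁ s₂ : ℝ)
    (hp₁ : 0 < p₁) (hp₂ : 0 < p₂) (hq₁ : 0 < q₁) (hq₂ : 0 < q₂)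
    (hr₁ : 0 < r₁) (hr₂ : 0 < r₂) (hs₁ : 0 < s₁) (hs₂ : 0 < s₂)
    (hps : p₁ + p₂ = 1) (hqs : q₁ + q₂ = 1) (hrs : r₁ + r₂ = 1) (hss : s₁ + s₂ = 1)
    (h : |p₁ * a₁ + q₁ * a₂ + r₁ * b₁ + s₁ * b₂| +
          |p₂ * a₁ + q₂ * a₂ + r₂ * b₁ + s₂ * b₂| =
        |a₁| + |a₂| + |b₁| + |b₂|) :
    0 ≤ a₁ * a₂ ∧ 0 ≤ a₁ * b₁ ∧ 0 ≤ a₁ * b₂ ∧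
      0 ≤ a₂ * b₁ ∧ 0 ≤ a₂ * b₂ ∧ 0 ≤ b₁ * b₂ := by
  have e1 : |p₁ * a₁| = p₁ * |a₁| := by rw [abs_mul, abs_of_pos hp₁]
  have e2 : |q₁ * a₂| = q₁ * |a₂| := by rw [abs_mul, abs_of_pos hq₁]
  have e3 : |r₁ * b₁| = r₁ * |b₁| := by rw [abs_mul, abs_of_pos hr₁]
  have e4 : |s₁ * b₂| = s₁ * |b₂| := by rw [abs_mul, abs_of_pos hs₁]
  have f1 : |p₂ * a₁| = p₂ * |a₁| := by rw [abs_mul, abs_of_pos hp₂]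
  have f2 : |q₂ * a₂| = q₂ * |a₂| := by rw [abs_mul, abs_of_pos hq₂]
  have f3 : |r₂ * b₁| = r₂ * |b₁| := by rw [abs_mul, abs_of_pos hr₂]
  have f4 : |s₂ * b₂| = s₂ * |b₂| := by rw [abs_mul, abs_of_pos hs₂]
  have t1 : |p₁ * a₁ + q₁ * a₂ + r₁ * b₁ + s₁ * b₂| ≤
      |p₁ * a₁| + |q₁ * a₂| + |r₁ * b₁| + |s₁ * b₂| := by
    calc |p₁ * a₁ + q₁ * a₂ + r₁ * b₁ + s₁ * b₂|
        ≤ |p₁ * a₁ + q₁ * a₂ + r₁ * b₁| + |s₁ * b₂| := abs_add_le _ _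
      _ ≤ |p₁ * a₁ + q₁ * a₂| + |r₁ * b₁| + |s₁ * b₂| := by
          linarith [abs_add_le (p₁ * a₁ + q₁ * a₂) (r₁ * b₁)]
      _ ≤ |p₁ * a₁| + |q₁ * a₂| + |r₁ * b₁| + |s₁ * b₂| := by
          linarith [abs_add_le (p₁ * a₁) (q₁ * a₂)]
  have t2 : |p₂ * a₁ + q₂ * a₂ + r₂ * b₁ + s₂ * b₂| ≤
      |p₂ * a₁| + |q₂ * a₂| + |r₂ * b₁| + |s₂ * b₂| := by
    calc |p₂ * a₁ + q₂ * a₂ + r₂ * b₁ + s₂ * b₂|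
        ≤ |p₂ * a₁ + q₂ * a₂ + r₂ * b₁| + |s₂ * b₂| := abs_add_le _ _
      _ ≤ |p₂ * a₁ + q₂ * a₂| + |r₂ * b₁| + |s₂ * b₂| := by
          linarith [abs_add_le (p₂ * a₁ + q₂ * a₂) (r₂ * b₁)]
      _ ≤ |p₂ * a₁| + |q₂ * a₂| + |r₂ * b₁| + |s₂ * b₂| := by
          linarith [abs_add_le (p₂ * a₁) (q₂ * a₂)]
  have total : (|p₁ * a₁| + |q₁ * a₂| + |r₁ * b₁| + |s₁ * b₂|) +
      (|p₂ * a₁| + |q₂ * a₂| + |r₂ * b₁| + |s₂ * b₂|) =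
      |a₁| + |a₂| + |b₁| + |b₂| := by
    rw [e1, e2, e3, e4, f1, f2, f3, f4]
    linear_combination |a₁| * hps + |a₂| * hqs + |b₁| * hrs + |b₂| * hss
  have eq1 : |p₁ * a₁ + q₁ * a₂ + r₁ * b₁ + s₁ * b₂| =
      |p₁ * a₁| + |q₁ * a₂| + |r₁ * b₁| + |s₁ * b₂| := by linarith
  obtain ⟨g1, g2, g3, g4, g5, g6⟩ := four_abs_saturation eq1
  refine ⟨nonneg_of_pos_mul (mul_pos hp₁ hq₁) (by rw [show p₁ * q₁ * (a₁ * a₂) = p₁ * a₁ * (q₁ * a₂) by ring]; exact g1),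
    nonneg_of_pos_mul (mul_pos hp₁ hr₁) (by rw [show p₁ * r₁ * (a₁ * b₁) = p₁ * a₁ * (r₁ * b₁) by ring]; exact g2),
    nonneg_of_pos_mul (mul_pos hp₁ hs₁) (by rw [show p₁ * s₁ * (a₁ * b₂) = p₁ * a₁ * (s₁ * b₂) by ring]; exact g3),
    nonneg_of_pos_mul (mul_pos hq₁ hr₁) (by rw [show q₁ * r₁ * (a₂ * b₁) = q₁ * a₂ * (r₁ * b₁) by ring]; exact g4),
    nonneg_of_pos_mul (mul_pos hq₁ hs₁) (by rw [show q₁ * s₁ * (a₂ * b₂) = q₁ * a₂ * (s₁ * b₂) by ring]; exact g5),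
    nonneg_of_pos_mul (mul_pos hr₁ hs₁) (by rw [show r₁ * s₁ * (b₁ * b₂) = r₁ * b₁ * (s₁ * b₂) by ring]; exact g6)⟩
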